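/- Let η > 0, γ > 0, r₀ ≥ γ, σ ∈ ℝ, T ∈ ℝ, and let A(t) := (1+γ/η)e^{η(t−T)} − γ/η and let C be the explicit mean-field-control function C(t) := K₁′(t−T) + K₂′(e^{η(t−T)}−1) + K₃′(log((γ+η)e^{η(t−T)}+r₀−γ) − log(η+r₀)) + K₄′(e^{η(t−T)}log((γ+η)e^{η(t−T)}+r₀−γ) − log(r₀+η)) + γ∫_t^T logΓ(((γ+η)/γ)e^{η(s−T)})ds, where K₁′ := −γ(σ²/(2η)−1), K₂′ := ((γ+η)/η)(σ²/(2η) − 2 − log γ), K₃′ := (r₀−γ)/η, K₄′ := (γ+η)/η. Set B := −A. Then for every t ∈ ℝ, x > 0 and μ̄ > 0, the function s ↦ A(s)·log x + B(s)·log μ̄ + C(s) is differentiable at t with derivative ∂, and the reduced dynamic programming equation holds: ∂ − ηB(t) − σ²A(t)/2 + (γ+ηA(t))·( log(γ/(r₀ − ηB(t))) + log μ̄ − log x ) + γ·log Γ(1 + ηA(t)/γ) = 0. -/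

import Mathlib

open MeasureTheory Real intervalIntegral

/-- The explicit MFC functions `A`, `B = −A`, `C` satisfy the reduced dynamic programming
equation of the non-LQ jump-control mean-field control problem: at every `t`, for
`x, μ̄ > 0`, the map `s ↦ A(s) log x + B(s) log μ̄ + C(s)` is differentiable at `t` with
derivative `d` satisfying
`d − ηB(t) − σ²A(t)/2 + (γ+ηA(t))(log(γ/(r₀−ηB(t))) + log μ̄ − log x)
  + γ log Γ(1 + ηA(t)/γ) = 0`. -/
theorem mfc_DPP_equation (η γ r₀ σ T : ℝ) (hη : 0 < η) (hγ : 0 < γ) (hr : γ ≤ r₀)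
    (A B C : ℝ → ℝ) (K₁' K₂' K₃' K₄' : ℝ)
    (hA : ∀ t, A t = (1 + γ / η) * Real.exp (η * (t - T)) - γ / η)
    (hB : ∀ t, B t = -A t)
    (hK₁ : K₁' = -γ * (σ ^ 2 / (2 * η) - 1))
    (hK₂ : K₂' = ((γ + η) / η) * (σ ^ 2 / (2 * η) - 2 - Real.log γ))
    (hK₃ : K₃' = (r₀ - γ) / η)
    (hK₄ : K₄' = (γ + η) / η)
    (hC : ∀ t, C t = K₁' * (t - T) + K₂' * (Real.exp (η * (t - T)) - 1)
        + K₃' * (Real.log ((γ + η) * Real.exp (η * (t - T)) + r₀ - γ) - Real.log (η + r₀))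
        + K₄' * (Real.exp (η * (t - T)) *
            Real.log ((γ + η) * Real.exp (η * (t - T)) + r₀ - γ) - Real.log (r₀ + η))
        + γ * ∫ s in t..T, Real.log (Real.Gamma (((γ + η) / γ) * Real.exp (η * (s - T))))) :
    ∀ t x μbar : ℝ, 0 < x → 0 < μbar →
      ∃ d : ℝ,
        HasDerivAt (fun s : ℝ => A s * Real.log x + B s * Real.log μbar + C s) d t ∧
        d - η * B t - σ ^ 2 * A t / 2
          + (γ + η * A t) * (Real.log (γ / (r₀ - η * B t)) + Real.log μbar - Real.log x)
          + γ * Real.log (Real.Gamma (1 + η * A t / γ)) = 0 := by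
  intro t x μbar hx hμ
  have hηne : η ≠ 0 := hη.ne'
  have hγne : γ ≠ 0 := hγ.ne'
  set e : ℝ := Real.exp (η * (t - T)) with he_def
  have he_pos : 0 < e := Real.exp_pos _
  have hP : 0 < (γ + η) * e + r₀ - γ := by
    have h1 : 0 < (γ + η) * e := mul_pos (by linarith) he_pos
    linarith
  set P : ℝ := (γ + η) * e + r₀ - γ with hP_def
  -- derivative of the exponential
  have hlin : HasDerivAt (fun s : ℝ => η * (s - T)) η t := by
    simpa using ((hasDerivAt_id t).sub_const T).const_mul η
  have hexp : HasDerivAt (fun s : ℝ => Real.exp (η * (s - T))) (e * η) t := hlin.exp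
  -- derivative of A·log x + B·log μ̄
  have hAd : HasDerivAt (fun s : ℝ => (1 + γ / η) * Real.exp (η * (s - T)) - γ / η)
      ((1 + γ / η) * (e * η)) t := (hexp.const_mul _).sub_const _
  -- inner function for logs
  have hg : HasDerivAt (fun s : ℝ => (γ + η) * Real.exp (η * (s - T)) + r₀ - γ)
      ((γ + η) * (e * η)) t := ((hexp.const_mul _).add_const r₀).sub_const γ
  have hlog : HasDerivAt (fun s : ℝ => Real.log ((γ + η) * Real.exp (η * (s - T)) + r₀ - γ))
      ((γ + η) * (e * η) / P) t := hg.log hP.ne'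
  -- product term
  have hprod : HasDerivAt (fun s : ℝ => Real.exp (η * (s - T)) *
      Real.log ((γ + η) * Real.exp (η * (s - T)) + r₀ - γ))
      (e * η * Real.log P + e * ((γ + η) * (e * η) / P)) t := hexp.mul hlog
  -- the integrand of the entropy integral
  set f : ℝ → ℝ := fun s => Real.log (Real.Gamma (((γ + η) / γ) * Real.exp (η * (s - T))))
    with hf_def
  have hfc : Continuous f := by
    rw [continuous_iff_continuousAt]
    intro s
    have harg_pos : 0 < ((γ + η) / γ) * Real.exp (η * (s - T)) :=
      mul_pos (div_pos (by linarith) hγ) (Real.exp_pos _)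
    have hcont_arg : ContinuousAt (fun s : ℝ => ((γ + η) / γ) * Real.exp (η * (s - T))) s := by
      fun_prop
    have hGamma : ContinuousAt (fun y : ℝ => Real.log (Real.Gamma y))
        (((γ + η) / γ) * Real.exp (η * (s - T))) := by
      refine (Real.differentiableAt_Gamma fun m => ?_).continuousAt.log
        (Real.Gamma_pos_of_pos harg_pos).ne'
      intro h
      rw [h] at harg_pos
      have : (0:ℝ) ≤ (m:ℝ) := Nat.cast_nonneg m
      linarith
    show ContinuousAt ((fun y => Real.log (Real.Gamma y)) ∘
      fun s : ℝ => ((γ + η) / γ) * Real.exp (η * (s - T))) s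
    exact ContinuousAt.comp (x := s) hGamma hcont_arg
  have hInt : HasDerivAt (fun u : ℝ => ∫ s in u..T, f s) (-f t) t :=
    intervalIntegral.integral_hasDerivAt_left (hfc.intervalIntegrable t T)
      (hfc.stronglyMeasurableAtFilter _ _) hfc.continuousAt
  -- assemble the derivative of C
  have hCd : HasDerivAt (fun s : ℝ => K₁' * (s - T) + K₂' * (Real.exp (η * (s - T)) - 1)
      + K₃' * (Real.log ((γ + η) * Real.exp (η * (s - T)) + r₀ - γ) - Real.log (η + r₀))
      + K₄' * (Real.exp (η * (s - T)) *
          Real.log ((γ + η) * Real.exp (η * (s - T)) + r₀ - γ) - Real.log (r₀ + η))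
      + γ * ∫ s' in s..T, f s')
      (K₁' * 1 + K₂' * (e * η) + K₃' * ((γ + η) * (e * η) / P)
        + K₄' * (e * η * Real.log P + e * ((γ + η) * (e * η) / P)) + γ * (-f t)) t := by
    refine HasDerivAt.add ?_ (hInt.const_mul γ)
    refine HasDerivAt.add ?_ ((hprod.sub_const _).const_mul K₄')
    refine HasDerivAt.add ?_ ((hlog.sub_const _).const_mul K₃')
    refine HasDerivAt.add ?_ ((hexp.sub_const _).const_mul K₂')
    exact ((hasDerivAt_id t).sub_const T).const_mul K₁'
  -- the full derivative
  refine ⟨(1 + γ / η) * (e * η) * Real.log x + (-((1 + γ / η) * (e * η))) * Real.log μbar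
    + (K₁' * 1 + K₂' * (e * η) + K₃' * ((γ + η) * (e * η) / P)
        + K₄' * (e * η * Real.log P + e * ((γ + η) * (e * η) / P)) + γ * (-f t)), ?_, ?_⟩
  · have hfun : (fun s : ℝ => A s * Real.log x + B s * Real.log μbar + C s)
        = fun s : ℝ => ((1 + γ / η) * Real.exp (η * (s - T)) - γ / η) * Real.log x
          + (-((1 + γ / η) * Real.exp (η * (s - T)) - γ / η)) * Real.log μbar
          + (K₁' * (s - T) + K₂' * (Real.exp (η * (s - T)) - 1)
            + K₃' * (Real.log ((γ + η) * Real.exp (η * (s - T)) + r₀ - γ) - Real.log (η + r₀))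
            + K₄' * (Real.exp (η * (s - T)) *
                Real.log ((γ + η) * Real.exp (η * (s - T)) + r₀ - γ) - Real.log (r₀ + η))
            + γ * ∫ s' in s..T, f s') := by
      funext s
      rw [hB s, hA s, hC s]
    rw [hfun]
    exact ((hAd.mul_const _).add ((hAd.neg).mul_const _)).add hCd
  · -- the DPP identity
    have hAt : η * A t = (γ + η) * e - γ := by
      rw [hA t]; field_simp
      try ring
    have hBt : r₀ - η * B t = P := by
      rw [hB t]; rw [hP_def]; linarith [hAt]
    have harg : 1 + η * A t / γ = ((γ + η) / γ) * e := by
      rw [hAt]; field_simp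
      try ring
    have hft : f t = Real.log (Real.Gamma (1 + η * A t / γ)) := by
      rw [hf_def, harg]
    have hlogdiv : Real.log (γ / (r₀ - η * B t)) = Real.log γ - Real.log P := by
      rw [hBt, Real.log_div hγne hP.ne']
    rw [hlogdiv, ← hft, hB t, hA t, hK₁, hK₂, hK₃, hK₄]
    simp only [hP_def]
    rw [← he_def]
    have hPne : (γ + η) * e + r₀ - γ ≠ 0 := by rw [← hP_def]; exact hP.ne'
    have hPne2 : η * e - γ + γ * e + r₀ ≠ 0 := by intro h; apply hPne; linarith
    field_simp
    ring_nf
    field_simp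
    ring
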